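/- arXiv:math/0604309 — 2 statements merged into one kernel-verified Lean document; each statement's English description precedes it below -/
import Mathlib

section
/- Let f be a quasiperiodically forced monotone interval map on 𝕋¹ × [a,b] over an irrational rotation, whose global attractor 𝒦 := ⋂_{n∈ℕ} fⁿ(𝕋¹×[a,b]) is pinched and whose upper and lower bounding graphs φ⁺(θ) := sup 𝒦_θ and φ⁻(θ) := inf 𝒦_θ are both non-continuous. Then f has sensitive dependence on initial conditions on all of 𝕋¹ × [a,b]. -/
open Set

lemma small_step (ω : ℝ) (hω : Irrational ω) {ε : ℝ} (hε : 0 < ε) :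
    ∃ (N : ℕ) (g : ℝ) (k : ℤ), 1 ≤ N ∧ 0 < |g| ∧ |g| < ε ∧ (N : ℝ) * ω = g - k := by
  set S := AddSubgroup.closure ({ω, 1} : Set ℝ) with hS
  have hdense : Dense (S : Set ℝ) := by
    rcases S.dense_or_cyclic with h | ⟨c, hc⟩
    · exact h
    · exfalso
      have hωS : ω ∈ S := AddSubgroup.subset_closure (by simp)
      have h1S : (1:ℝ) ∈ S := AddSubgroup.subset_closure (by simp)
      rw [hc, AddSubgroup.mem_closure_singleton] at hωS h1S
      obtain ⟨m, hm⟩ := hωS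
      obtain ⟨n, hn⟩ := h1S
      have hn0 : (n : ℝ) ≠ 0 := by
        intro h
        rw [zsmul_eq_mul, h, zero_mul] at hn
        exact one_ne_zero hn.symm
      have hc' : c = 1 / (n:ℝ) := by
        rw [zsmul_eq_mul] at hn
        field_simp
        linarith [hn]
      apply hω.ne_rat ((m : ℚ) / (n : ℚ))
      rw [zsmul_eq_mul] at hm
      push_cast
      rw [← hm, hc']
      ring
  have hne : (Ioo (0:ℝ) (min ε 1)).Nonempty := ⟨min ε 1 / 2,
    by positivity, by simp only [lt_min_iff] at *; constructor <;> linarith [min_le_left ε 1, min_le_right ε 1, lt_min hε one_pos]⟩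
  obtain ⟨s, hsS, hs⟩ := hdense.exists_mem_open isOpen_Ioo hne
  rw [SetLike.mem_coe, AddSubgroup.mem_closure_pair] at hsS
  obtain ⟨p, q, hpq⟩ := hsS
  rw [zsmul_eq_mul, zsmul_eq_mul, mul_one] at hpq
  have hp0 : p ≠ 0 := by
    rintro rfl
    simp only [Int.cast_zero, zero_mul, zero_add] at hpq
    have h1 : (0:ℝ) < q := hpq ▸ hs.1
    have h2 : (q:ℝ) < 1 := lt_of_lt_of_le (hpq ▸ hs.2) (min_le_right _ _)
    have : (1:ℤ) ≤ q := by exact_mod_cast h1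
    have : (1:ℝ) ≤ (q:ℝ) := by exact_mod_cast this
    linarith
  rcases hp0.lt_or_gt with hp | hp
  · refine ⟨(-p).toNat, -s, -q, ?_, ?_, ?_, ?_⟩
    · omega
    · rw [abs_neg, abs_of_pos hs.1]; exact hs.1
    · rw [abs_neg, abs_of_pos hs.1]; exact lt_of_lt_of_le hs.2 (min_le_left _ _)
    · have : ((-p).toNat : ℝ) = -(p:ℝ) := by
        rw [← Int.cast_natCast, Int.toNat_of_nonneg (by omega)]; push_cast; ring
      rw [this]; push_cast; linarith [hpq]
  · refine ⟨p.toNat, s, q, ?_, ?_, ?_, ?_⟩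
    · omega
    · rw [abs_of_pos hs.1]; exact hs.1
    · rw [abs_of_pos hs.1]; exact lt_of_lt_of_le hs.2 (min_le_left _ _)
    · have : (p.toNat : ℝ) = (p:ℝ) := by
        rw [← Int.cast_natCast, Int.toNat_of_nonneg (by omega)]
      rw [this]; push_cast; linarith [hpq]


lemma orbit_dense (ω : ℝ) (hω : Irrational ω) (θ target : AddCircle (1:ℝ)) (m : ℕ)
    {ε : ℝ} (hε : 0 < ε) :
    ∃ n : ℕ, m ≤ n ∧ dist (θ + n • ((ω : ℝ) : AddCircle (1:ℝ))) target < ε := by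
  obtain ⟨N, g, k, hN1, hg0, hgε, hNg⟩ := small_step ω hω hε
  obtain ⟨c, hc⟩ := QuotientAddGroup.mk_surjective
    (target - (θ + m • ((ω:ℝ) : AddCircle (1:ℝ))))
  have hgne : g ≠ 0 := by intro h; rw [h] at hg0; simp at hg0
  obtain ⟨K, hK⟩ : ∃ K : ℤ, 0 ≤ (c - K)/g := by
    rcases hgne.lt_or_gt with hgneg | hgpos
    · exact ⟨⌈c⌉, div_nonneg_iff.2 (Or.inr ⟨by linarith [Int.le_ceil c], hgneg.le⟩)⟩
    · exact ⟨⌊c⌋, div_nonneg (by linarith [Int.floor_le c]) hgpos.le⟩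
  set s : ℝ := c - K with hsdef
  set t : ℝ := s / g with htdef
  set j : ℕ := ⌊t⌋.toNat with hjdef
  have hjq : ((j:ℕ):ℝ) = ((⌊t⌋:ℤ):ℝ) := by
    have h0 : (0:ℤ) ≤ ⌊t⌋ := Int.le_floor.2 (by exact_mod_cast hK)
    rw [hjdef]; exact_mod_cast congrArg (Int.cast : ℤ → ℝ) (Int.toNat_of_nonneg h0)
  have hst : t * g = s := div_mul_cancel₀ s hgne
  have h1 : ((⌊t⌋:ℤ):ℝ) ≤ t := Int.floor_le t
  have h2 : t < ((⌊t⌋:ℤ):ℝ) + 1 := Int.lt_floor_add_one t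
  have hj : |(j:ℝ)*g - s| < ε := by
    have : |(j:ℝ)*g - s| = |((⌊t⌋:ℤ):ℝ) - t| * |g| := by
      rw [hjq, ← hst, ← abs_mul]; ring_nf
    rw [this]
    have habs : |((⌊t⌋:ℤ):ℝ) - t| < 1 := by rw [abs_lt]; constructor <;> linarith
    calc |((⌊t⌋:ℤ):ℝ) - t| * |g| < 1 * |g| := by
          exact mul_lt_mul_of_pos_right habs hg0
      _ = |g| := one_mul _
      _ < ε := hgε
  refine ⟨m + j * N, Nat.le_add_right _ _, ?_⟩
  have key : θ + (m + j * N) • ((ω:ℝ) : AddCircle (1:ℝ)) - target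
      = (((j:ℝ)*g - s : ℝ) : AddCircle (1:ℝ)) := by
    have hc' : target = (c : AddCircle (1:ℝ)) + (θ + m • ((ω:ℝ) : AddCircle (1:ℝ))) := by
      rw [hc]; abel
    rw [hc', add_nsmul]
    have h1' : (j * N) • ((ω:ℝ) : AddCircle (1:ℝ)) = ((((j*N:ℕ):ℝ) * ω : ℝ) : AddCircle (1:ℝ)) := by
      rw [show (((j*N:ℕ):ℝ))*ω = (j*N:ℕ) • ω from (nsmul_eq_mul _ _).symm, AddCircle.coe_nsmul]
    rw [h1']
    have hxy : ((((j*N:ℕ):ℝ) * ω - c) - ((j:ℝ)*g - s) : ℝ) = ((-((j:ℤ)*k+K) : ℤ) : ℝ) := by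
      have hh : (((j*N:ℕ):ℝ)) * ω = (j:ℝ) * ((N:ℝ)*ω) := by push_cast; ring
      rw [hh, hNg, hsdef]; push_cast; ring
    have h3 : ((((j*N:ℕ):ℝ) * ω - c : ℝ) : AddCircle (1:ℝ))
        = (((j:ℝ)*g - s : ℝ) : AddCircle (1:ℝ)) := by
      have hz : (((((j*N:ℕ):ℝ) * ω - c) - ((j:ℝ)*g - s) : ℝ) : AddCircle (1:ℝ)) = 0 := by
        refine (AddCircle.coe_eq_zero_iff 1).2 ⟨-((j:ℤ)*k+K), ?_⟩
        rw [zsmul_eq_mul, mul_one, hxy]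
      have hsub : (((((j*N:ℕ):ℝ) * ω - c) - ((j:ℝ)*g - s) : ℝ) : AddCircle (1:ℝ))
          = ((((j*N:ℕ):ℝ) * ω - c : ℝ) : AddCircle (1:ℝ)) - (((j:ℝ)*g - s : ℝ) : AddCircle (1:ℝ)) := by
        norm_cast
      rw [hsub] at hz
      exact sub_eq_zero.mp hz
    rw [← h3]
    have h2' : ((((j*N:ℕ):ℝ) * ω : ℝ) : AddCircle (1:ℝ)) - (c : AddCircle (1:ℝ))
        = ((((j*N:ℕ):ℝ) * ω - c : ℝ) : AddCircle (1:ℝ)) := by norm_cast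
    rw [← h2']
    abel
  rw [dist_eq_norm, key]
  calc ‖(((j:ℝ)*g - s : ℝ) : AddCircle (1:ℝ))‖ ≤ ‖(j:ℝ)*g - s‖ := QuotientAddGroup.norm_mk_le_norm
    _ = |(j:ℝ)*g - s| := Real.norm_eq_abs _
    _ < ε := hj



noncomputable def Fit (F : AddCircle (1:ℝ) → ℝ → ℝ) (ω' : AddCircle (1:ℝ)) :
    ℕ → AddCircle (1:ℝ) → ℝ → ℝ
  | 0, _, t => t
  | (n+1), θ, t => F (θ + n • ω') (Fit F ω' n θ t)

variable {F : AddCircle (1:ℝ) → ℝ → ℝ} {ω' : AddCircle (1:ℝ)} {a b : ℝ}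

lemma Fit_iterate (f : AddCircle (1:ℝ) × ℝ → AddCircle (1:ℝ) × ℝ)
    (hf : ∀ p, f p = (p.1 + ω', F p.1 p.2)) (n : ℕ) (θ : AddCircle (1:ℝ)) (t : ℝ) :
    f^[n] (θ, t) = (θ + n • ω', Fit F ω' n θ t) := by
  induction n with
  | zero => simp [Fit]
  | succ n ih =>
      rw [Function.iterate_succ_apply', ih, hf]
      simp only [Fit, succ_nsmul]
      exact Prod.ext (by simp; abel) rfl

lemma Fit_mem (hFmaps : ∀ θ, Set.MapsTo (F θ) (Set.Icc a b) (Set.Icc a b))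
    (n : ℕ) (θ : AddCircle (1:ℝ)) {t : ℝ} (ht : t ∈ Icc a b) :
    Fit F ω' n θ t ∈ Icc a b := by
  induction n with
  | zero => exact ht
  | succ n ih => exact hFmaps _ ih

lemma Fit_mono (hFmono : ∀ θ, MonotoneOn (F θ) (Set.Icc a b))
    (hFmaps : ∀ θ, Set.MapsTo (F θ) (Set.Icc a b) (Set.Icc a b))
    (n : ℕ) (θ : AddCircle (1:ℝ)) {t t' : ℝ} (ht : t ∈ Icc a b) (ht' : t' ∈ Icc a b)
    (h : t ≤ t') : Fit F ω' n θ t ≤ Fit F ω' n θ t' := by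
  induction n with
  | zero => exact h
  | succ n ih => exact hFmono _ (Fit_mem hFmaps n θ ht) (Fit_mem hFmaps n θ ht') ih

lemma Fit_cont (f : AddCircle (1:ℝ) × ℝ → AddCircle (1:ℝ) × ℝ)
    (hf : ∀ p, f p = (p.1 + ω', F p.1 p.2)) (hcont : Continuous f)
    (n : ℕ) (θ : AddCircle (1:ℝ)) : Continuous (fun t => Fit F ω' n θ t) := by
  have : (fun t => Fit F ω' n θ t) = fun t => (f^[n] (θ, t)).2 := by
    funext t; rw [Fit_iterate f hf]
  rw [this]
  exact (continuous_snd.comp ((hcont.iterate n).comp (by continuity)))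

lemma Fit_succ' (n : ℕ) (θ : AddCircle (1:ℝ)) (t : ℝ) :
    Fit F ω' (n+1) θ t = Fit F ω' n (θ + ω') (F θ t) := by
  induction n with
  | zero => simp [Fit]
  | succ n ih =>
      show F (θ + (n+1) • ω') (Fit F ω' (n+1) θ t) = F ((θ + ω') + n • ω') (Fit F ω' n (θ + ω') (F θ t))
      rw [ih, succ_nsmul]
      congr 1
      abel


section BFun

variable (F ω' b) in
noncomputable def BF (n : ℕ) (θ : AddCircle (1:ℝ)) : ℝ := Fit F ω' n (θ - n • ω') b

-- membership description of the n-th image set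
lemma mem_image_iter (f : AddCircle (1:ℝ) × ℝ → AddCircle (1:ℝ) × ℝ)
    (hf : ∀ p, f p = (p.1 + ω', F p.1 p.2)) (n : ℕ) (θ : AddCircle (1:ℝ)) (ξ : ℝ) :
    (θ, ξ) ∈ f^[n] '' (Set.univ ×ˢ Set.Icc a b) ↔
      ∃ t ∈ Icc a b, Fit F ω' n (θ - n • ω') t = ξ := by
  constructor
  · rintro ⟨⟨β, t⟩, ⟨-, ht⟩, him⟩
    rw [Fit_iterate f hf] at him
    obtain ⟨h1, h2⟩ := Prod.mk.injEq .. ▸ him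
    refine ⟨t, ht, ?_⟩
    have hβ : β = θ - n • ω' := by rw [← h1]; abel
    rw [← hβ, h2]
  · rintro ⟨t, ht, hfit⟩
    refine ⟨(θ - n • ω', t), ⟨trivial, ht⟩, ?_⟩
    rw [Fit_iterate f hf, hfit]
    exact Prod.ext (by simp) rfl

end BFun


theorem graph_facts
    (ω : ℝ) (a b : ℝ) (hab : a ≤ b)
    (F : AddCircle (1 : ℝ) → ℝ → ℝ)
    (hFmono : ∀ θ, MonotoneOn (F θ) (Set.Icc a b))
    (hFmaps : ∀ θ, Set.MapsTo (F θ) (Set.Icc a b) (Set.Icc a b))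
    (f : AddCircle (1 : ℝ) × ℝ → AddCircle (1 : ℝ) × ℝ)
    (hf : ∀ p, f p = (p.1 + (ω : AddCircle (1 : ℝ)), F p.1 p.2))
    (hcont : Continuous f)
    (K : Set (AddCircle (1 : ℝ) × ℝ))
    (hK : K = ⋂ n : ℕ, f^[n] '' (Set.univ ×ˢ Set.Icc a b))
    (φp : AddCircle (1 : ℝ) → ℝ)
    (hφp : ∀ θ, φp θ = sSup {ξ : ℝ | (θ, ξ) ∈ K}) :
    (∀ θ, φp θ ∈ Set.Icc a b) ∧ (∀ θ, (θ, φp θ) ∈ K) ∧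
      (∀ θ, φp (θ + ((ω : ℝ) : AddCircle (1 : ℝ))) = F θ (φp θ)) := by
  set ω' : AddCircle (1:ℝ) := ((ω : ℝ) : AddCircle (1:ℝ)) with hω'
  set B := BF F ω' b with hBdef
  set A := BF F ω' a with hAdef
  have hf' : ∀ p, f p = (p.1 + ω', F p.1 p.2) := hf
  -- basic facts about B and A
  have hBmem : ∀ n θ, B n θ ∈ Icc a b := fun n θ => Fit_mem hFmaps n _ (right_mem_Icc.2 hab)
  have hAmem : ∀ n θ, A n θ ∈ Icc a b := fun n θ => Fit_mem hFmaps n _ (left_mem_Icc.2 hab)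
  have hAB : ∀ n θ, A n θ ≤ B n θ := fun n θ =>
    Fit_mono hFmono hFmaps n _ (left_mem_Icc.2 hab) (right_mem_Icc.2 hab) hab
  have hBsucc : ∀ n θ, B (n+1) θ = Fit F ω' n (θ - n • ω') (F (θ - (n+1) • ω') b) := by
    intro n θ
    show Fit F ω' (n+1) (θ - (n+1) • ω') b = _
    rw [Fit_succ']
    congr 2
    rw [succ_nsmul]; abel
  have hBanti : ∀ n θ, B (n+1) θ ≤ B n θ := by
    intro n θ
    rw [hBsucc]
    exact Fit_mono hFmono hFmaps n _ (hFmaps _ (right_mem_Icc.2 hab)) (right_mem_Icc.2 hab)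
      (hFmaps _ (right_mem_Icc.2 hab)).2
  have hAsucc : ∀ n θ, A (n+1) θ = Fit F ω' n (θ - n • ω') (F (θ - (n+1) • ω') a) := by
    intro n θ
    show Fit F ω' (n+1) (θ - (n+1) • ω') a = _
    rw [Fit_succ']
    congr 2
    rw [succ_nsmul]; abel
  have hAmono : ∀ n θ, A n θ ≤ A (n+1) θ := by
    intro n θ
    rw [hAsucc]
    exact Fit_mono hFmono hFmaps n _ (left_mem_Icc.2 hab) (hFmaps _ (left_mem_Icc.2 hab))
      (hFmaps _ (left_mem_Icc.2 hab)).1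
  have hBanti' : ∀ θ, Antitone (fun n => B n θ) :=
    fun θ => antitone_nat_of_succ_le (fun n => hBanti n θ)
  have hAmono' : ∀ θ, Monotone (fun n => A n θ) :=
    fun θ => monotone_nat_of_le_succ (fun n => hAmono n θ)
  have hBbdd : ∀ θ, BddBelow (range fun n => B n θ) :=
    fun θ => ⟨a, by rintro x ⟨n, rfl⟩; exact (hBmem n θ).1⟩
  have hBcont : ∀ n, Continuous (B n) := by
    intro n
    have : B n = fun θ' => (f^[n] (θ' - n • ω', b)).2 := by
      funext θ'
      show Fit F ω' n (θ' - n • ω') b = _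
      rw [Fit_iterate f hf']
    rw [this]
    exact continuous_snd.comp ((hcont.iterate n).comp
      ((continuous_id.sub continuous_const).prodMk continuous_const))
  have hKmem : ∀ θ ξ, (θ, ξ) ∈ K ↔ ∀ n, ∃ t ∈ Icc a b, Fit F ω' n (θ - n • ω') t = ξ := by
    intro θ ξ
    rw [hK, mem_iInter]
    exact forall_congr' (fun n => mem_image_iter f hf' n θ ξ)
  have hKbound : ∀ θ ξ, (θ, ξ) ∈ K → ∀ n, A n θ ≤ ξ ∧ ξ ≤ B n θ := by
    intro θ ξ hmem n
    obtain ⟨t, ht, hfit⟩ := (hKmem θ ξ).1 hmem n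
    constructor
    · rw [← hfit]
      exact Fit_mono hFmono hFmaps n _ (left_mem_Icc.2 hab) ht ht.1
    · rw [← hfit]
      exact Fit_mono hFmono hFmaps n _ ht (right_mem_Icc.2 hab) ht.2
  have hABle : ∀ θ n m, A n θ ≤ B m θ := by
    intro θ n m
    rcases le_total n m with h | h
    · exact le_trans ((hAmono' θ) h) (hAB m θ)
    · exact le_trans (hAB n θ) ((hBanti' θ) h)
  have hInfmem : ∀ θ, (θ, ⨅ n, B n θ) ∈ K := by
    intro θ
    rw [hKmem]
    intro m
    have h1 : A m θ ≤ ⨅ n, B n θ := le_ciInf (fun n => hABle θ m n)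
    have h2 : (⨅ n, B n θ) ≤ B m θ := ciInf_le (hBbdd θ) m
    have hcontm : ContinuousOn (fun t => Fit F ω' m (θ - m • ω') t) (Icc a b) :=
      (Fit_cont f hf' hcont m _).continuousOn
    have := intermediate_value_Icc hab hcontm
    have hsub : Icc (A m θ) (B m θ) ⊆ (fun t => Fit F ω' m (θ - m • ω') t) '' (Icc a b) := this
    obtain ⟨t, ht, hfit⟩ := hsub ⟨h1, h2⟩
    exact ⟨t, ht, hfit⟩
  have hφpB : ∀ θ, φp θ = ⨅ n, B n θ := by
    intro θ
    rw [hφp]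
    apply IsGreatest.csSup_eq
    constructor
    · exact hInfmem θ
    · rintro ξ hξ
      exact le_ciInf (fun n => (hKbound θ ξ hξ n).2)
  have hφpmem : ∀ θ, φp θ ∈ Icc a b := by
    intro θ
    rw [hφpB]
    constructor
    · exact le_ciInf (fun n => (hBmem n θ).1)
    · exact le_trans (ciInf_le (hBbdd θ) 0) (hBmem 0 θ).2
  
  -- invariance: φp (θ + ω') = F θ (φp θ)
  have hFcont : ∀ θ, Continuous (F θ) := by
    intro θ
    have : F θ = fun t => (f (θ, t)).2 := by funext t; rw [hf']
    rw [this]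
    exact continuous_snd.comp (hcont.comp (Continuous.prodMk_right θ))
  have hinv : ∀ θ, φp (θ + ω') = F θ (φp θ) := by
    intro θ
    have e1 : ∀ n, B (n+1) (θ + ω') = F θ (B n θ) := by
      intro n
      show Fit F ω' (n+1) ((θ + ω') - (n+1) • ω') b = _
      have harg : (θ + ω') - (n+1) • ω' = θ - n • ω' := by rw [succ_nsmul]; abel
      rw [harg]
      show F ((θ - n • ω') + n • ω') (Fit F ω' n (θ - n • ω') b) = _
      congr 1
      abel
    have htendB : Filter.Tendsto (fun n => B n θ) Filter.atTop (nhds (⨅ n, B n θ)) :=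
      tendsto_atTop_ciInf (hBanti' θ) (hBbdd θ)
    have htendF : Filter.Tendsto (fun n => F θ (B n θ)) Filter.atTop (nhds (F θ (φp θ))) := by
      rw [hφpB]
      exact ((hFcont θ).continuousAt).tendsto.comp htendB
    have hFanti : Antitone (fun n => F θ (B n θ)) := by
      intro n m h
      exact hFmono θ (hBmem m θ) (hBmem n θ) (hBanti' θ h)
    have hFbdd : BddBelow (range fun n => F θ (B n θ)) :=
      ⟨a, by rintro x ⟨n, rfl⟩; exact (hFmaps θ (hBmem n θ)).1⟩
    have htendF' : Filter.Tendsto (fun n => F θ (B n θ)) Filter.atTop (nhds (⨅ n, F θ (B n θ))) :=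
      tendsto_atTop_ciInf hFanti hFbdd
    have heq : (⨅ n, F θ (B n θ)) = F θ (φp θ) := tendsto_nhds_unique htendF' htendF
    have htail : (⨅ n, B n (θ + ω')) = ⨅ n, B (n+1) (θ + ω') := by
      apply le_antisymm
      · exact le_ciInf (fun n => ciInf_le (hBbdd _) (n+1))
      · refine le_ciInf (fun n => ?_)
        refine le_trans (ciInf_le ?_ n) (hBanti n (θ + ω'))
        exact ⟨a, by rintro x ⟨n, rfl⟩; exact (hBmem (n+1) (θ+ω')).1⟩
      
    rw [hφpB, htail]
    simp only [e1]
    exact heq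
  refine ⟨hφpmem, ?_, hinv⟩
  intro θ
  have := hInfmem θ
  rwa [← hφpB θ] at this

theorem aux_side
    (ω : ℝ) (hω : Irrational ω) (a b : ℝ) (hab : a ≤ b)
    (F : AddCircle (1 : ℝ) → ℝ → ℝ)
    (hFmono : ∀ θ, MonotoneOn (F θ) (Set.Icc a b))
    (hFmaps : ∀ θ, Set.MapsTo (F θ) (Set.Icc a b) (Set.Icc a b))
    (f : AddCircle (1 : ℝ) × ℝ → AddCircle (1 : ℝ) × ℝ)
    (hf : ∀ p, f p = (p.1 + (ω : AddCircle (1 : ℝ)), F p.1 p.2))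
    (hcont : Continuous f)
    (K : Set (AddCircle (1 : ℝ) × ℝ))
    (hK : K = ⋂ n : ℕ, f^[n] '' (Set.univ ×ˢ Set.Icc a b))
    (φp : AddCircle (1 : ℝ) → ℝ)
    (hφp : ∀ θ, φp θ = sSup {ξ : ℝ | (θ, ξ) ∈ K})
    (hφpnc : ¬ Continuous φp) :
    ∃ ε > 0, ∀ θ ξ, ξ ∈ Set.Icc a b → φp θ < ξ → ∀ δ > 0,
      ∃ y ∈ Metric.closedBall ((θ, ξ) : AddCircle (1 : ℝ) × ℝ) δ,
      ∃ z ∈ Metric.closedBall ((θ, ξ) : AddCircle (1 : ℝ) × ℝ) δ,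
        ∃ n : ℕ, ε ≤ dist (f^[n] y) (f^[n] z) := by
  set ω' : AddCircle (1:ℝ) := ((ω : ℝ) : AddCircle (1:ℝ)) with hω'
  set B := BF F ω' b with hBdef
  set A := BF F ω' a with hAdef
  have hf' : ∀ p, f p = (p.1 + ω', F p.1 p.2) := hf
  -- basic facts about B and A
  have hBmem : ∀ n θ, B n θ ∈ Icc a b := fun n θ => Fit_mem hFmaps n _ (right_mem_Icc.2 hab)
  have hAmem : ∀ n θ, A n θ ∈ Icc a b := fun n θ => Fit_mem hFmaps n _ (left_mem_Icc.2 hab)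
  have hAB : ∀ n θ, A n θ ≤ B n θ := fun n θ =>
    Fit_mono hFmono hFmaps n _ (left_mem_Icc.2 hab) (right_mem_Icc.2 hab) hab
  have hBsucc : ∀ n θ, B (n+1) θ = Fit F ω' n (θ - n • ω') (F (θ - (n+1) • ω') b) := by
    intro n θ
    show Fit F ω' (n+1) (θ - (n+1) • ω') b = _
    rw [Fit_succ']
    congr 2
    rw [succ_nsmul]; abel
  have hBanti : ∀ n θ, B (n+1) θ ≤ B n θ := by
    intro n θ
    rw [hBsucc]
    exact Fit_mono hFmono hFmaps n _ (hFmaps _ (right_mem_Icc.2 hab)) (right_mem_Icc.2 hab)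
      (hFmaps _ (right_mem_Icc.2 hab)).2
  have hAsucc : ∀ n θ, A (n+1) θ = Fit F ω' n (θ - n • ω') (F (θ - (n+1) • ω') a) := by
    intro n θ
    show Fit F ω' (n+1) (θ - (n+1) • ω') a = _
    rw [Fit_succ']
    congr 2
    rw [succ_nsmul]; abel
  have hAmono : ∀ n θ, A n θ ≤ A (n+1) θ := by
    intro n θ
    rw [hAsucc]
    exact Fit_mono hFmono hFmaps n _ (left_mem_Icc.2 hab) (hFmaps _ (left_mem_Icc.2 hab))
      (hFmaps _ (left_mem_Icc.2 hab)).1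
  have hBanti' : ∀ θ, Antitone (fun n => B n θ) :=
    fun θ => antitone_nat_of_succ_le (fun n => hBanti n θ)
  have hAmono' : ∀ θ, Monotone (fun n => A n θ) :=
    fun θ => monotone_nat_of_le_succ (fun n => hAmono n θ)
  have hBbdd : ∀ θ, BddBelow (range fun n => B n θ) :=
    fun θ => ⟨a, by rintro x ⟨n, rfl⟩; exact (hBmem n θ).1⟩
  have hBcont : ∀ n, Continuous (B n) := by
    intro n
    have : B n = fun θ' => (f^[n] (θ' - n • ω', b)).2 := by
      funext θ'
      show Fit F ω' n (θ' - n • ω') b = _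
      rw [Fit_iterate f hf']
    rw [this]
    exact continuous_snd.comp ((hcont.iterate n).comp
      ((continuous_id.sub continuous_const).prodMk continuous_const))
  have hKmem : ∀ θ ξ, (θ, ξ) ∈ K ↔ ∀ n, ∃ t ∈ Icc a b, Fit F ω' n (θ - n • ω') t = ξ := by
    intro θ ξ
    rw [hK, mem_iInter]
    exact forall_congr' (fun n => mem_image_iter f hf' n θ ξ)
  have hKbound : ∀ θ ξ, (θ, ξ) ∈ K → ∀ n, A n θ ≤ ξ ∧ ξ ≤ B n θ := by
    intro θ ξ hmem n
    obtain ⟨t, ht, hfit⟩ := (hKmem θ ξ).1 hmem n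
    constructor
    · rw [← hfit]
      exact Fit_mono hFmono hFmaps n _ (left_mem_Icc.2 hab) ht ht.1
    · rw [← hfit]
      exact Fit_mono hFmono hFmaps n _ ht (right_mem_Icc.2 hab) ht.2
  have hABle : ∀ θ n m, A n θ ≤ B m θ := by
    intro θ n m
    rcases le_total n m with h | h
    · exact le_trans ((hAmono' θ) h) (hAB m θ)
    · exact le_trans (hAB n θ) ((hBanti' θ) h)
  have hInfmem : ∀ θ, (θ, ⨅ n, B n θ) ∈ K := by
    intro θ
    rw [hKmem]
    intro m
    have h1 : A m θ ≤ ⨅ n, B n θ := le_ciInf (fun n => hABle θ m n)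
    have h2 : (⨅ n, B n θ) ≤ B m θ := ciInf_le (hBbdd θ) m
    have hcontm : ContinuousOn (fun t => Fit F ω' m (θ - m • ω') t) (Icc a b) :=
      (Fit_cont f hf' hcont m _).continuousOn
    have := intermediate_value_Icc hab hcontm
    have hsub : Icc (A m θ) (B m θ) ⊆ (fun t => Fit F ω' m (θ - m • ω') t) '' (Icc a b) := this
    obtain ⟨t, ht, hfit⟩ := hsub ⟨h1, h2⟩
    exact ⟨t, ht, hfit⟩
  have hφpB : ∀ θ, φp θ = ⨅ n, B n θ := by
    intro θ
    rw [hφp]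
    apply IsGreatest.csSup_eq
    constructor
    · exact hInfmem θ
    · rintro ξ hξ
      exact le_ciInf (fun n => (hKbound θ ξ hξ n).2)
  have hφpmem : ∀ θ, φp θ ∈ Icc a b := by
    intro θ
    rw [hφpB]
    constructor
    · exact le_ciInf (fun n => (hBmem n θ).1)
    · exact le_trans (ciInf_le (hBbdd θ) 0) (hBmem 0 θ).2
  
  -- invariance: φp (θ + ω') = F θ (φp θ)
  have hFcont : ∀ θ, Continuous (F θ) := by
    intro θ
    have : F θ = fun t => (f (θ, t)).2 := by funext t; rw [hf']
    rw [this]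
    exact continuous_snd.comp (hcont.comp (Continuous.prodMk_right θ))
  have hinv : ∀ θ, φp (θ + ω') = F θ (φp θ) := by
    intro θ
    have e1 : ∀ n, B (n+1) (θ + ω') = F θ (B n θ) := by
      intro n
      show Fit F ω' (n+1) ((θ + ω') - (n+1) • ω') b = _
      have harg : (θ + ω') - (n+1) • ω' = θ - n • ω' := by rw [succ_nsmul]; abel
      rw [harg]
      show F ((θ - n • ω') + n • ω') (Fit F ω' n (θ - n • ω') b) = _
      congr 1
      abel
    have htendB : Filter.Tendsto (fun n => B n θ) Filter.atTop (nhds (⨅ n, B n θ)) :=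
      tendsto_atTop_ciInf (hBanti' θ) (hBbdd θ)
    have htendF : Filter.Tendsto (fun n => F θ (B n θ)) Filter.atTop (nhds (F θ (φp θ))) := by
      rw [hφpB]
      exact ((hFcont θ).continuousAt).tendsto.comp htendB
    have hFanti : Antitone (fun n => F θ (B n θ)) := by
      intro n m h
      exact hFmono θ (hBmem m θ) (hBmem n θ) (hBanti' θ h)
    have hFbdd : BddBelow (range fun n => F θ (B n θ)) :=
      ⟨a, by rintro x ⟨n, rfl⟩; exact (hFmaps θ (hBmem n θ)).1⟩
    have htendF' : Filter.Tendsto (fun n => F θ (B n θ)) Filter.atTop (nhds (⨅ n, F θ (B n θ))) :=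
      tendsto_atTop_ciInf hFanti hFbdd
    have heq : (⨅ n, F θ (B n θ)) = F θ (φp θ) := tendsto_nhds_unique htendF' htendF
    have htail : (⨅ n, B n (θ + ω')) = ⨅ n, B (n+1) (θ + ω') := by
      apply le_antisymm
      · exact le_ciInf (fun n => ciInf_le (hBbdd _) (n+1))
      · refine le_ciInf (fun n => ?_)
        refine le_trans (ciInf_le ?_ n) (hBanti n (θ + ω'))
        exact ⟨a, by rintro x ⟨n, rfl⟩; exact (hBmem (n+1) (θ+ω')).1⟩
      
    rw [hφpB, htail]
    simp only [e1]
    exact heq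
  -- points above the graph stay above
  have habove : ∀ θ (ξ : ℝ) (n : ℕ), ξ ∈ Icc a b → φp θ ≤ ξ →
      φp (θ + n • ω') ≤ Fit F ω' n θ ξ := by
    intro θ ξ n
    induction n generalizing θ ξ with
    | zero => intro h1 h2; simpa [Fit] using h2
    | succ n ih =>
        intro h1 h2
        rw [Fit_succ']
        have h3 : φp (θ + ω') ≤ F θ ξ := by
          rw [hinv θ]
          exact hFmono θ (hφpmem θ) h1 h2
        have harg : θ + (n+1) • ω' = (θ + ω') + n • ω' := by rw [succ_nsmul]; abel
        rw [harg]
        exact ih (θ + ω') (F θ ξ) (hFmaps θ h1) h3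
  -- upper semicontinuity
  have husc : ∀ θ (c : ℝ), φp θ < c → ∃ r > 0, ∀ β, dist β θ < r → φp β < c := by
    intro θ c hc
    rw [hφpB] at hc
    obtain ⟨n, hn⟩ := exists_lt_of_ciInf_lt hc
    have := Metric.continuous_iff.1 (hBcont n) θ (c - B n θ) (by linarith)
    obtain ⟨r, hr, hball⟩ := this
    refine ⟨r, hr, fun β hβ => ?_⟩
    have h1 : B n β < c := by
      have := hball β hβ
      rw [Real.dist_eq, abs_lt] at this
      linarith
    calc φp β ≤ B n β := by rw [hφpB]; exact ciInf_le (hBbdd β) n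
      _ < c := h1
  -- quantitative discontinuity
  obtain ⟨θs, ε₀, hε₀, hdisc⟩ :
      ∃ (θs : AddCircle (1:ℝ)) (ε₀ : ℝ), 0 < ε₀ ∧ ∀ r > 0, ∃ θ', dist θ' θs < r ∧ φp θ' ≤ φp θs - ε₀ := by
    rw [continuous_iff_continuousAt] at hφpnc
    push_neg at hφpnc
    obtain ⟨θs, hθs⟩ := hφpnc
    rw [Metric.continuousAt_iff] at hθs
    push_neg at hθs
    obtain ⟨ε₁, hε₁, hθs⟩ := hθs
    obtain ⟨r₀, hr₀, husc₀⟩ := husc θs (φp θs + ε₁/2) (by linarith)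
    refine ⟨θs, ε₁/2, by linarith, fun r hr => ?_⟩
    obtain ⟨θ', hθ'1, hθ'2⟩ := hθs (min r r₀) (lt_min hr hr₀)
    refine ⟨θ', lt_of_lt_of_le hθ'1 (min_le_left _ _), ?_⟩
    have h1 : φp θ' < φp θs + ε₁/2 := husc₀ θ' (lt_of_lt_of_le hθ'1 (min_le_right _ _))
    rcases le_abs.1 hθ'2 with h | h
    · linarith
    · linarith
  
  -- final assembly
  refine ⟨ε₀/2, by linarith, ?_⟩
  intro θ ξ hξab hξ δ hδ
  obtain ⟨r₁, hr₁, hball₁⟩ := husc θ ξ hξ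
  set δ₁ := min δ r₁ with hδ₁def
  have hδ₁ : 0 < δ₁ := lt_min hδ hr₁
  obtain ⟨θ', hθ'1, hθ'2⟩ := hdisc (δ₁/2) (by linarith)
  have h5 : (⨅ n, B n θ') < φp θs - ε₀/2 := by rw [← hφpB θ']; linarith
  obtain ⟨m, hm⟩ := exists_lt_of_ciInf_lt h5
  obtain ⟨r₂, hr₂, hball₂⟩ := Metric.continuous_iff.1 (hBcont m) θ' (φp θs - ε₀/2 - B m θ')
    (by linarith)
  obtain ⟨n, hnm, hn⟩ := orbit_dense ω hω θ θ' m (lt_min hr₂ (half_pos hδ₁))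
  have hnθ' : dist (θ + n • ω') θ' < r₂ := lt_of_lt_of_le hn (min_le_left _ _)
  have hnθs : dist (θ + n • ω') θs < δ₁ := by
    calc dist (θ + n • ω') θs ≤ dist (θ + n • ω') θ' + dist θ' θs := dist_triangle _ _ _
      _ < δ₁/2 + δ₁/2 := add_lt_add (lt_of_lt_of_le hn (min_le_right _ _)) hθ'1
      _ = δ₁ := by ring
  have hyb : Fit F ω' n θ ξ ≤ B n (θ + n • ω') := by
    have hBn : B n (θ + n • ω') = Fit F ω' n θ b := by
      show Fit F ω' n ((θ + n • ω') - n • ω') b = _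
      congr 1
      abel
    rw [hBn]
    exact Fit_mono hFmono hFmaps n θ hξab (right_mem_Icc.2 hab) hξab.2
  have hyb2 : B n (θ + n • ω') ≤ B m (θ + n • ω') := hBanti' _ hnm
  have hyb3 : B m (θ + n • ω') < φp θs - ε₀/2 := by
    have h8 := hball₂ _ hnθ'
    rw [Real.dist_eq, abs_lt] at h8
    linarith
  set β : AddCircle (1:ℝ) := θs - n • ω' with hβdef
  have hβθ : dist β θ < δ₁ := by
    have h9 : β - θ = θs - (θ + n • ω') := by rw [hβdef]; abel
    rw [dist_eq_norm, h9, ← dist_eq_norm, dist_comm]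
    exact hnθs
  have hφβ : φp β < ξ := hball₁ β (lt_of_lt_of_le hβθ (min_le_right δ r₁))
  have hz : φp (β + n • ω') ≤ Fit F ω' n β ξ := habove β ξ n hξab hφβ.le
  have hβn : β + n • ω' = θs := by rw [hβdef]; abel
  rw [hβn] at hz
  refine ⟨(θ, ξ), ?_, (β, ξ), ?_, n, ?_⟩
  · rw [Metric.mem_closedBall, dist_self]
    linarith
  · rw [Metric.mem_closedBall]
    have h10 : dist ((β, ξ) : AddCircle (1:ℝ) × ℝ) ((θ, ξ) : AddCircle (1:ℝ) × ℝ) = dist β θ := by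
      rw [Prod.dist_eq]
      simp [dist_self, dist_nonneg]
    rw [h10]
    exact le_trans hβθ.le (min_le_left δ r₁)
  · rw [Fit_iterate f hf', Fit_iterate f hf']
    have hge : |Fit F ω' n θ ξ - Fit F ω' n β ξ| ≤
        dist ((θ + n • ω', Fit F ω' n θ ξ) : AddCircle (1:ℝ) × ℝ) (β + n • ω', Fit F ω' n β ξ) := by
      rw [Prod.dist_eq, ← Real.dist_eq]
      exact le_max_right _ _
    have h6 : Fit F ω' n θ ξ < φp θs - ε₀/2 := lt_of_le_of_lt (hyb.trans hyb2) hyb3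
    have h11 : ε₀/2 ≤ |Fit F ω' n θ ξ - Fit F ω' n β ξ| := by
      rw [abs_sub_comm]
      calc ε₀/2 ≤ Fit F ω' n β ξ - Fit F ω' n θ ξ := by linarith
        _ ≤ |Fit F ω' n β ξ - Fit F ω' n θ ξ| := le_abs_self _
    linarith

/-- If the global attractor `𝒦 = ⋂ₙ fⁿ(𝕋¹×[a,b])` of a
quasiperiodically forced monotone interval map is pinched and its upper and lower
bounding graphs are both non-continuous, then `f` has sensitive dependence on
initial conditions on all of `𝕋¹ × [a,b]`. -/
theorem pinched_global_attractor_sensitive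
    (ω : ℝ) (hω : Irrational ω) (a b : ℝ) (hab : a ≤ b)
    (F : AddCircle (1 : ℝ) → ℝ → ℝ)
    (hFmono : ∀ θ, MonotoneOn (F θ) (Set.Icc a b))
    (hFmaps : ∀ θ, Set.MapsTo (F θ) (Set.Icc a b) (Set.Icc a b))
    (f : AddCircle (1 : ℝ) × ℝ → AddCircle (1 : ℝ) × ℝ)
    (hf : ∀ p, f p = (p.1 + (ω : AddCircle (1 : ℝ)), F p.1 p.2))
    (hcont : Continuous f)
    (K : Set (AddCircle (1 : ℝ) × ℝ))
    (hK : K = ⋂ n : ℕ, f^[n] '' (Set.univ ×ˢ Set.Icc a b))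
    (hpinch : ∃ θ : AddCircle (1 : ℝ), ∃ ξ : ℝ, {ξ' : ℝ | (θ, ξ') ∈ K} = {ξ})
    (φp φm : AddCircle (1 : ℝ) → ℝ)
    (hφp : ∀ θ, φp θ = sSup {ξ : ℝ | (θ, ξ) ∈ K})
    (hφm : ∀ θ, φm θ = sInf {ξ : ℝ | (θ, ξ) ∈ K})
    (hφpnc : ¬ Continuous φp) (hφmnc : ¬ Continuous φm) :
    ∃ ε > 0, ∀ x ∈ Set.univ ×ˢ Set.Icc a b, ∀ δ > 0,
      ∃ y ∈ Metric.closedBall x δ, ∃ z ∈ Metric.closedBall x δ,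
        ∃ n : ℕ, ε ≤ dist (f^[n] y) (f^[n] z) := by
  classical
  set ω₀ : AddCircle (1:ℝ) := ((ω : ℝ) : AddCircle (1:ℝ)) with hω₀
  obtain ⟨hpmem, hpK, hpinv⟩ := graph_facts ω a b hab F hFmono hFmaps f hf hcont K hK φp hφp
  rcases eq_or_lt_of_le hab with heq | hltab
  · exfalso
    apply hφpnc
    have hconst : φp = fun _ => a := by
      funext θ
      have h1 := hpmem θ
      rw [← heq] at h1
      exact le_antisymm h1.2 h1.1
    rw [hconst]
    exact continuous_const
  -- the flipped (order-reversed) system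
  set e : AddCircle (1:ℝ) × ℝ → AddCircle (1:ℝ) × ℝ := fun p => (p.1, -p.2) with hedef
  have he : Continuous e := continuous_fst.prodMk continuous_snd.neg
  have hee : ∀ p, e (e p) = p := fun p => by simp [hedef]
  set F' : AddCircle (1:ℝ) → ℝ → ℝ := fun θ t => -F θ (-t) with hF'def
  set f' : AddCircle (1:ℝ) × ℝ → AddCircle (1:ℝ) × ℝ := fun p => (p.1 + ω₀, F' p.1 p.2)
    with hf'def
  have hfe : ∀ p, f' p = e (f (e p)) := by
    intro p
    rw [hf'def, hedef]
    simp only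
    rw [hf (p.1, -p.2)]
  have hmono' : ∀ θ, MonotoneOn (F' θ) (Set.Icc (-b) (-a)) := by
    intro θ t ht t' ht' h
    simp only [hF'def, Set.mem_Icc] at *
    have h1 : -t ∈ Set.Icc a b := ⟨by linarith [ht.2], by linarith [ht.1]⟩
    have h1' : -t' ∈ Set.Icc a b := ⟨by linarith [ht'.2], by linarith [ht'.1]⟩
    have := hFmono θ h1' h1 (by linarith)
    linarith
  have hmaps' : ∀ θ, Set.MapsTo (F' θ) (Set.Icc (-b) (-a)) (Set.Icc (-b) (-a)) := by
    intro θ t ht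
    simp only [hF'def, Set.mem_Icc] at *
    have h1 : -t ∈ Set.Icc a b := ⟨by linarith [ht.2], by linarith [ht.1]⟩
    have := hFmaps θ h1
    exact ⟨by linarith [this.2], by linarith [this.1]⟩
  have hcont' : Continuous f' := by
    have hfe' : f' = e ∘ f ∘ e := funext hfe
    rw [hfe']
    exact he.comp (hcont.comp he)
  have himgmem : ∀ (S : Set (AddCircle (1:ℝ) × ℝ)) p, p ∈ e '' S ↔ e p ∈ S := by
    intro S p
    constructor
    · rintro ⟨q, hq, rfl⟩; rwa [hee]
    · intro h; exact ⟨e p, h, hee p⟩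
  have hit : ∀ (n : ℕ) p, f'^[n] p = e (f^[n] (e p)) := by
    intro n
    induction n with
    | zero => intro p; simp [hee]
    | succ n ih =>
        intro p
        rw [Function.iterate_succ_apply', ih p, hfe, hee,
          show f^[n+1] (e p) = f (f^[n] (e p)) from Function.iterate_succ_apply' f n (e p)]
  have hSmem : ∀ q : AddCircle (1:ℝ) × ℝ,
      q ∈ (Set.univ ×ˢ Set.Icc (-b) (-a) : Set _) ↔ e q ∈ (Set.univ ×ˢ Set.Icc a b : Set _) := by
    rintro ⟨β, t⟩
    simp only [hedef, Set.mem_prod, Set.mem_univ, true_and, Set.mem_Icc]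
    constructor <;> rintro ⟨h1, h2⟩ <;> constructor <;> linarith
  have hK' : e '' K = ⋂ n : ℕ, f'^[n] '' (Set.univ ×ˢ Set.Icc (-b) (-a)) := by
    ext p
    rw [himgmem, hK, Set.mem_iInter]
    simp only [Set.mem_iInter]
    constructor
    · intro h n
      obtain ⟨q, hq, hfq⟩ := h n
      refine ⟨e q, (hSmem (e q)).2 (by rwa [hee]), ?_⟩
      rw [hit n (e q), hee, hfq, hee]
    · intro h n
      obtain ⟨q, hq, hfq⟩ := h n
      refine ⟨e q, (hSmem q).1 hq, ?_⟩
      rw [← hfq, hit n q, hee]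
  have hφ'p : ∀ θ, (fun θ => -φm θ) θ = sSup {ξ : ℝ | (θ, ξ) ∈ e '' K} := by
    intro θ
    have hset : {ξ : ℝ | (θ, ξ) ∈ e '' K} = -{ξ : ℝ | (θ, ξ) ∈ K} := by
      ext ξ
      rw [Set.mem_neg, Set.mem_setOf_eq, Set.mem_setOf_eq, himgmem K (θ, ξ)]
    simp only
    rw [hset, hφm θ, Real.sInf_def, neg_neg]
  have hφ'pnc : ¬ Continuous (fun θ => -φm θ) := by
    intro h
    apply hφmnc
    have := h.neg
    exact this.congr (fun θ => by simp)
  obtain ⟨hmmem', hmK', hminv'⟩ := graph_facts ω (-b) (-a) (neg_le_neg hab) F' hmono' hmaps'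
    f' (fun _ => rfl) hcont' (e '' K) hK' (fun θ => -φm θ) hφ'p
  have hminv : ∀ θ, φm (θ + ω₀) = F θ (φm θ) := by
    intro θ
    have := hminv' θ
    simp only [hF'def, neg_neg] at this
    linarith
  -- the two one-sided sensitivity results
  obtain ⟨ε₁, hε₁, haux₁⟩ := aux_side ω hω a b hab F hFmono hFmaps f hf hcont K hK φp hφp hφpnc
  obtain ⟨ε₂, hε₂, haux₂⟩ := aux_side ω hω (-b) (-a) (neg_le_neg hab) F' hmono' hmaps'
    f' (fun _ => rfl) hcont' (e '' K) hK' (fun θ => -φm θ) hφ'p hφ'pnc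
  have hiso : ∀ p q, dist (e p) (e q) = dist p q := by
    intro p q
    rw [Prod.dist_eq, Prod.dist_eq]
    simp [hedef, dist_neg_neg]
  have haux₂' : ∀ θ ξ, ξ ∈ Set.Icc a b → ξ < φm θ → ∀ δ > 0,
      ∃ y ∈ Metric.closedBall ((θ, ξ) : AddCircle (1:ℝ) × ℝ) δ,
      ∃ z ∈ Metric.closedBall ((θ, ξ) : AddCircle (1:ℝ) × ℝ) δ,
        ∃ n : ℕ, ε₂ ≤ dist (f^[n] y) (f^[n] z) := by
    intro θ ξ hξab hξ δ hδ
    obtain ⟨y', hy', z', hz', n, hn⟩ := haux₂ θ (-ξ)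
      ⟨neg_le_neg hξab.2, neg_le_neg hξab.1⟩ (by change -φm θ < -ξ; linarith) δ hδ
    have hcenter : ((θ, ξ) : AddCircle (1:ℝ) × ℝ) = e (θ, -ξ) := by simp [hedef]
    refine ⟨e y', ?_, e z', ?_, n, ?_⟩
    · rw [Metric.mem_closedBall, hcenter, hiso]
      exact hy'
    · rw [Metric.mem_closedBall, hcenter, hiso]
      exact hz'
    · have hfn : ∀ p, f^[n] (e p) = e (f'^[n] p) := fun p => by rw [hit n p, hee]
      rw [hfn y', hfn z', hiso]
      exact hn
  -- assemble
  refine ⟨min ε₁ ε₂, lt_min hε₁ hε₂, ?_⟩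
  rintro ⟨θ, ξ⟩ hx δ hδ
  have hξab : ξ ∈ Set.Icc a b := hx.2
  obtain ⟨θp, ξp, hfib⟩ := hpinch
  have hφpθp : φp θp = ξp := by rw [hφp θp, hfib]; exact csSup_singleton _
  have hφmθp : φm θp = ξp := by rw [hφm θp, hfib]; exact csInf_singleton _
  have hpe : ∀ n : ℕ, φp (θp + n • ω₀) = φm (θp + n • ω₀) := by
    intro n
    induction n with
    | zero => simp [hφpθp, hφmθp]
    | succ n ih =>
        have harg : θp + (n+1) • ω₀ = (θp + n • ω₀) + ω₀ := by rw [succ_nsmul]; abel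
        rw [harg, hpinv, hminv, ih]
  obtain ⟨n₀, -, hn₀⟩ := orbit_dense ω hω θp θ 0 (half_pos hδ)
  set θ' : AddCircle (1:ℝ) := θp + n₀ • ω₀ with hθ'def
  set p : ℝ := φp θ' with hpdef
  have hpm : φm θ' = p := (hpe n₀).symm
  set u : ℝ := max a (ξ - δ/3) with hudef
  set v : ℝ := min b (ξ + δ/3) with hvdef
  have huv : u < v := by
    rcases lt_or_ge ξ b with h | h
    · have h1 : u ≤ ξ := max_le hξab.1 (by linarith)
      have h2 : ξ < v := lt_min h (by linarith)
      linarith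
    · have hbe : ξ = b := le_antisymm hξab.2 h
      have h2 : v = b := min_eq_left (by linarith)
      rw [h2, hudef]
      exact max_lt hltab (by rw [hbe]; linarith)
  have hu : u ∈ Set.Icc a b := ⟨le_max_left _ _, max_le hab (by linarith [hξab.2])⟩
  have hv : v ∈ Set.Icc a b := ⟨le_min hab (by linarith [hξab.1]), min_le_left _ _⟩
  have hud : |u - ξ| ≤ δ/2 := by
    rw [abs_le]
    constructor
    · have : ξ - δ/3 ≤ u := le_max_right _ _
      linarith
    · have : u ≤ ξ := max_le hξab.1 (by linarith)
      linarith
  have hvd : |v - ξ| ≤ δ/2 := by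
    rw [abs_le]
    constructor
    · have : ξ ≤ v := le_min hξab.2 (by linarith)
      linarith
    · have : v ≤ ξ + δ/3 := min_le_right _ _
      linarith
  set ξ' : ℝ := if p = u then v else u with hξ'def
  have hξ'mem : ξ' ∈ Set.Icc a b := by
    rw [hξ'def]; split <;> assumption
  have hξ'd : |ξ' - ξ| ≤ δ/2 := by
    rw [hξ'def]; split <;> assumption
  have hξ'ne : ξ' ≠ p := by
    rw [hξ'def]
    split
    · rename_i hc
      rw [hc]
      exact huv.ne'
    · rename_i hc
      exact fun hh => hc hh.symm
  have hdx : dist ((θ', ξ') : AddCircle (1:ℝ) × ℝ) (θ, ξ) ≤ δ/2 := by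
    rw [Prod.dist_eq]
    exact max_le hn₀.le (by rw [Real.dist_eq]; exact hξ'd)
  have hsub : Metric.closedBall ((θ', ξ') : AddCircle (1:ℝ) × ℝ) (δ/2)
      ⊆ Metric.closedBall ((θ, ξ) : AddCircle (1:ℝ) × ℝ) δ :=
    Metric.closedBall_subset_closedBall' (by linarith)
  rcases hξ'ne.lt_or_gt with hcase | hcase
  · -- ξ' < p = φm θ'
    obtain ⟨y, hy, z, hz, n, hn⟩ := haux₂' θ' ξ' hξ'mem (by rw [hpm]; exact hcase)
      (δ/2) (half_pos hδ)
    exact ⟨y, hsub hy, z, hsub hz, n, le_trans (min_le_right ε₁ ε₂) hn⟩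
  · -- φp θ' < ξ'
    obtain ⟨y, hy, z, hz, n, hn⟩ := haux₁ θ' ξ' hξ'mem hcase (δ/2) (half_pos hδ)
    exact ⟨y, hsub hy, z, hsub hz, n, le_trans (min_le_left ε₁ ε₂) hn⟩
end

section
/- Let g : X → X be continuous on a compact metric space X without isolated points, transitive, with a finite invariant measure of full support, and suppose g does not have sensitive dependence on initial conditions. Then g is uniquely ergodic. -/
open MeasureTheory
open scoped BoundedContinuousFunction NNReal ENNReal

section AuxUE

variable {X : Type*} [MetricSpace X] [CompactSpace X]

lemma finEq (g : X → X) (hg : Continuous g) :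
    ∀ (m : ℕ) (ε : ℝ), 0 < ε → ∃ η > 0, ∀ i < m, ∀ a b : X, dist a b ≤ η →
      dist (g^[i] a) (g^[i] b) ≤ ε := by
  intro m
  induction m with
  | zero => exact fun ε hε => ⟨1, one_pos, by omega⟩
  | succ m ih =>
    intro ε hε
    obtain ⟨η₀, hη₀, h₀⟩ := ih ε hε
    obtain ⟨δ, hδ, hδ'⟩ := Metric.uniformContinuous_iff.mp
      (CompactSpace.uniformContinuous_of_continuous (hg.iterate m)) ε hε
    refine ⟨min η₀ (δ/2), lt_min hη₀ (by linarith), fun i hi a b hab => ?_⟩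
    rcases Nat.lt_succ_iff_lt_or_eq.mp hi with h | rfl
    · exact h₀ i h a b (hab.trans (min_le_left _ _))
    · exact (hδ' (lt_of_le_of_lt (hab.trans (min_le_right _ _)) (by linarith))).le


lemma equicontAt (g : X → X) (hg : Continuous g)
    (hstab : ∀ ε > 0, ∃ x : X, ∃ δ > 0, ∀ y, dist y x ≤ δ → ∀ n : ℕ,
      dist (g^[n] x) (g^[n] y) ≤ ε)
    (q : X) (hq : closure (Set.range fun n : ℕ => g^[n] q) = Set.univ) :
    ∀ ε > 0, ∃ η > 0, ∀ y, dist y q ≤ η → ∀ n : ℕ, dist (g^[n] q) (g^[n] y) ≤ ε := by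
  intro ε hε
  obtain ⟨x₀, δ, hδ, hstable⟩ := hstab (ε/2) (by linarith)
  have hx₀ : x₀ ∈ closure (Set.range fun n : ℕ => g^[n] q) := hq ▸ Set.mem_univ x₀
  obtain ⟨p, ⟨m, rfl⟩, hpm⟩ := Metric.mem_closure_iff.mp hx₀ (δ/2) (by linarith)
  obtain ⟨η₁, hη₁, h₁⟩ := finEq g hg (m+1) (δ/2) (by linarith)
  obtain ⟨η₂, hη₂, h₂⟩ := finEq g hg m ε hε
  refine ⟨min η₁ η₂, lt_min hη₁ hη₂, fun y hy n => ?_⟩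
  rw [dist_comm y q] at hy
  rcases lt_or_ge n m with h | h
  · exact h₂ n h q y (hy.trans (min_le_right _ _))
  · obtain ⟨k, rfl⟩ : ∃ k, n = k + m := ⟨n - m, by omega⟩
    rw [Function.iterate_add_apply, Function.iterate_add_apply]
    have hqx2 : dist (g^[m] q) x₀ ≤ δ/2 := by
      rw [dist_comm]; exact le_of_lt (by simpa using hpm)
    have hqx : dist (g^[m] q) x₀ ≤ δ := by linarith
    have hyx : dist (g^[m] y) x₀ ≤ δ := by
      have := h₁ m (by omega) q y (hy.trans (min_le_left _ _))
      calc dist (g^[m] y) x₀ ≤ dist (g^[m] y) (g^[m] q) + dist (g^[m] q) x₀ := dist_triangle _ _ _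
        _ ≤ δ/2 + δ/2 := by rw [dist_comm (g^[m] y)]; linarith
        _ = δ := by ring
    have t1 := hstable (g^[m] q) hqx k
    have t2 := hstable (g^[m] y) hyx k
    calc dist (g^[k] (g^[m] q)) (g^[k] (g^[m] y))
        ≤ dist (g^[k] (g^[m] q)) (g^[k] x₀) + dist (g^[k] x₀) (g^[k] (g^[m] y)) := dist_triangle _ _ _
      _ ≤ ε/2 + ε/2 := by rw [dist_comm] at t1; linarith
      _ = ε := by ring

lemma syndetic_returns [MeasurableSpace X] [BorelSpace X] (g : X → X) (hg : Continuous g) (μ : Measure X) [IsFiniteMeasure μ]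
    (hinv : ∀ A : Set X, MeasurableSet A → μ (g ⁻¹' A) = μ A)
    (W : Set X) (hW : IsOpen W) (hWpos : 0 < μ W) :
    ∃ K : ℕ, ∀ l : ℕ, ∃ n : ℕ, 1 ≤ n ∧ l ≤ n ∧ n ≤ l + K ∧ ∃ w ∈ W, g^[n] w ∈ W := by
  classical
  -- invariance under iterates
  have iterInv : ∀ (n : ℕ), μ (g^[n] ⁻¹' W) = μ W := by
    intro n
    induction n with
    | zero => simp
    | succ n ih =>
      rw [Function.iterate_succ, Set.preimage_comp,
        hinv _ ((hW.preimage (hg.iterate n)).measurableSet)]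
      exact ih
  obtain ⟨k, hk⟩ := ENNReal.exists_nat_mul_gt (ne_of_gt hWpos) (measure_ne_top μ Set.univ)
  set ret : ℕ → Prop := fun n => ∃ w ∈ W, g^[n] w ∈ W with hret
  have pig : ∀ a : ℕ → ℕ, StrictMono a → ∃ i j : ℕ, i < j ∧ ret (a j - a i) := by
    intro a ha
    have hmeas : ∀ i ∈ Finset.range k, NullMeasurableSet (g^[a i] ⁻¹' W) μ :=
      fun i _ => ((hW.preimage (hg.iterate (a i))).measurableSet).nullMeasurableSet
    have hsum : μ Set.univ < ∑ i ∈ Finset.range k, μ (g^[a i] ⁻¹' W) := by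
      have : ∑ i ∈ Finset.range k, μ (g^[a i] ⁻¹' W) = k * μ W := by
        simp [iterInv, Finset.sum_const]
      rw [this]; exact hk
    obtain ⟨i, hi, j, hj, hij, x, hx1, hx2⟩ :=
      exists_nonempty_inter_of_measure_univ_lt_sum_measure μ hmeas hsum
    rcases hij.lt_or_gt with h | h
    · refine ⟨i, j, h, g^[a i] x, hx1, ?_⟩
      rw [← Function.iterate_add_apply, Nat.sub_add_cancel (ha h).le]
      exact hx2
    · refine ⟨j, i, h, g^[a j] x, hx2, ?_⟩
      rw [← Function.iterate_add_apply, Nat.sub_add_cancel (ha h).le]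
      exact hx1
  by_contra hcon
  push_neg at hcon
  choose L hL using hcon
  set a : ℕ → ℕ := fun n => Nat.rec 1 (fun _ prev => L prev + 1 + prev) n with haa
  have aS : ∀ j, a (j+1) = L (a j) + 1 + a j := fun j => rfl
  have a1 : ∀ j, 1 ≤ a j := by
    intro j; induction j with
    | zero => exact le_refl 1
    | succ j ih => rw [aS]; omega
  have amono : StrictMono a := strictMono_nat_of_lt_succ (fun j => by rw [aS]; omega)
  have key : ∀ i j : ℕ, i < j → ¬ ret (a j - a i) := by
    intro i j hij
    obtain ⟨j', rfl⟩ : ∃ j', j = j' + 1 := ⟨j - 1, by omega⟩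
    have hii : a i ≤ a j' := amono.le_iff_le.mpr (by omega)
    have h1 : a (j'+1) - a i = L (a j') + 1 + (a j' - a i) := by
      rw [aS]; omega
    rw [h1]
    have h2 := a1 i
    rintro ⟨w, hw1, hw2⟩
    exact hL (a j') (L (a j') + 1 + (a j' - a i)) (by omega) (by omega) (by omega) w hw1 hw2
  obtain ⟨i, j, hij, hr⟩ := pig a amono
  exact key i j hij hr

lemma minimal_orbits [MeasurableSpace X] [BorelSpace X]
    (g : X → X) (hg : Continuous g) (μ : Measure X) [IsFiniteMeasure μ]
    (hinv : ∀ A : Set X, MeasurableSet A → μ (g ⁻¹' A) = μ A)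
    (hfull : ∀ U : Set X, IsOpen U → U.Nonempty → 0 < μ U)
    (hstab : ∀ ε > 0, ∃ x : X, ∃ δ > 0, ∀ y, dist y x ≤ δ → ∀ n : ℕ,
      dist (g^[n] x) (g^[n] y) ≤ ε)
    (z : X) (hz : closure (Set.range fun n : ℕ => g^[n] z) = Set.univ) :
    ∀ p : X, closure (Set.range fun n : ℕ => g^[n] p) = Set.univ := by
  have hEq := equicontAt g hg hstab z hz
  have hsyn : ∀ α > 0, ∃ K : ℕ, ∀ l : ℕ, ∃ n : ℕ, l ≤ n ∧ n ≤ l + K ∧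
      dist (g^[n] z) z ≤ α := by
    intro α hα
    obtain ⟨η, hη, hEqz⟩ := hEq (α/2) (by linarith)
    set r := min η (α/2) with hr
    have hrpos : 0 < r := lt_min hη (by linarith)
    have hWpos : 0 < μ (Metric.ball z r) :=
      hfull _ Metric.isOpen_ball ⟨z, Metric.mem_ball_self hrpos⟩
    obtain ⟨K, hK⟩ := syndetic_returns g hg μ hinv _ Metric.isOpen_ball hWpos
    refine ⟨K, fun l => ?_⟩
    obtain ⟨n, _, hn2, hn3, w, hw1, hw2⟩ := hK l
    refine ⟨n, hn2, hn3, ?_⟩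
    have h1 : dist (g^[n] z) (g^[n] w) ≤ α/2 :=
      hEqz w ((Metric.mem_ball.mp hw1).le.trans (min_le_left _ _)) n
    have h2 : dist (g^[n] w) z ≤ α/2 :=
      (Metric.mem_ball.mp hw2).le.trans (min_le_right _ _)
    calc dist (g^[n] z) z ≤ dist (g^[n] z) (g^[n] w) + dist (g^[n] w) z := dist_triangle _ _ _
      _ ≤ α := by linarith
  intro p
  have hzmem : z ∈ closure (Set.range fun n : ℕ => g^[n] p) := by
    rw [Metric.mem_closure_iff]
    intro α hα
    obtain ⟨K, hK⟩ := hsyn (α/3) (by linarith)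
    obtain ⟨β, hβ, hfe⟩ := finEq g hg (K+1) (α/3) (by linarith)
    have hp : p ∈ closure (Set.range fun n : ℕ => g^[n] z) := hz ▸ Set.mem_univ p
    obtain ⟨o, ⟨l, rfl⟩, hlo⟩ := Metric.mem_closure_iff.mp hp β hβ
    obtain ⟨n, hn1, hn2, hn3⟩ := hK l
    refine ⟨g^[n - l] p, ⟨n - l, rfl⟩, ?_⟩
    have h1 : dist (g^[n-l] p) (g^[n-l] (g^[l] z)) ≤ α/3 :=
      hfe (n-l) (by omega) p (g^[l] z) hlo.le
    rw [← Function.iterate_add_apply, Nat.sub_add_cancel hn1] at h1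
    calc dist z (g^[n-l] p)
        ≤ dist z (g^[n] z) + dist (g^[n] z) (g^[n-l] p) := dist_triangle _ _ _
      _ ≤ α/3 + α/3 := by
          rw [dist_comm z (g^[n] z)]
          rw [dist_comm (g^[n-l] p) (g^[n] z)] at h1
          linarith
      _ < α := by linarith
  have horb : ∀ n : ℕ, g^[n] z ∈ closure (Set.range fun m : ℕ => g^[m] p) := by
    intro n
    have h1 : g^[n] '' closure (Set.range fun m : ℕ => g^[m] p) ⊆
        closure (g^[n] '' Set.range fun m : ℕ => g^[m] p) :=
      image_closure_subset_closure_image (hg.iterate n)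
    have h2 : g^[n] '' Set.range (fun m : ℕ => g^[m] p) ⊆ Set.range fun m : ℕ => g^[m] p := by
      rintro - ⟨-, ⟨m, rfl⟩, rfl⟩
      exact ⟨n + m, by simp [Function.iterate_add_apply]⟩
    exact closure_mono h2 (h1 ⟨z, hzmem, rfl⟩)
  apply Set.eq_univ_of_univ_subset
  calc Set.univ = closure (Set.range fun n : ℕ => g^[n] z) := hz.symm
    _ ⊆ closure (closure (Set.range fun n : ℕ => g^[n] p)) :=
        closure_mono (Set.range_subset_iff.mpr horb)
    _ = closure (Set.range fun n : ℕ => g^[n] p) := closure_closure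

lemma unif_equicont (g : X → X) (hg : Continuous g)
    (hstab : ∀ ε > 0, ∃ x : X, ∃ δ > 0, ∀ y, dist y x ≤ δ → ∀ n : ℕ,
      dist (g^[n] x) (g^[n] y) ≤ ε)
    (hmin : ∀ p : X, closure (Set.range fun n : ℕ => g^[n] p) = Set.univ)
    (z : X) :
    ∀ ε > 0, ∃ η > 0, ∀ a b : X, dist a b ≤ η → ∀ n : ℕ,
      dist (g^[n] a) (g^[n] b) ≤ ε := by
  intro ε hε
  have H : ∀ p : X, ∃ η > 0, ∀ y, dist y p ≤ η → ∀ n : ℕ,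
      dist (g^[n] p) (g^[n] y) ≤ ε/2 :=
    fun p => equicontAt g hg hstab p (hmin p) (ε/2) (by linarith)
  choose η hηpos hηspec using H
  obtain ⟨t, ht⟩ := isCompact_univ.elim_finite_subcover
    (fun p : X => Metric.ball p (η p / 2)) (fun p => Metric.isOpen_ball)
    (fun x _ => Set.mem_iUnion.mpr ⟨x, Metric.mem_ball_self (by linarith [hηpos x])⟩)
  have htne : t.Nonempty := by
    obtain ⟨p, hp, -⟩ := Set.mem_iUnion₂.mp (ht (Set.mem_univ z))
    exact ⟨p, hp⟩
  refine ⟨t.inf' htne (fun p => η p / 2), ?_, ?_⟩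
  · exact (Finset.lt_inf'_iff htne).mpr fun p _ => by linarith [hηpos p]
  · intro a b hab n
    obtain ⟨p, hp, hap⟩ := Set.mem_iUnion₂.mp (ht (Set.mem_univ a))
    have hinf := Finset.inf'_le (f := fun p => η p / 2) hp
    have hap' : dist a p ≤ η p := by
      have := Metric.mem_ball.mp hap; linarith [hηpos p]
    have hbp : dist b p ≤ η p := by
      have h1 := Metric.mem_ball.mp hap
      calc dist b p ≤ dist b a + dist a p := dist_triangle _ _ _
        _ ≤ η p / 2 + η p / 2 := add_le_add (by rw [dist_comm]; linarith [hab.trans hinf]) h1.le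
        _ = η p := by ring
    have t1 := hηspec p a hap' n
    have t2 := hηspec p b hbp n
    calc dist (g^[n] a) (g^[n] b) ≤ dist (g^[n] a) (g^[n] p) + dist (g^[n] p) (g^[n] b) :=
          dist_triangle _ _ _
      _ ≤ ε/2 + ε/2 := add_le_add (by rw [dist_comm]; exact t1) t2
      _ = ε := by ring

lemma key_integral [MeasurableSpace X] [BorelSpace X] (g : X → X) (hg : Continuous g) (z : X)
    (hz : closure (Set.range fun n : ℕ => g^[n] z) = Set.univ)
    (hue : ∀ ε > 0, ∃ η > 0, ∀ a b : X, dist a b ≤ η → ∀ n : ℕ,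
      dist (g^[n] a) (g^[n] b) ≤ ε)
    (f : X →ᵇ ℝ) (ε : ℝ) (hε : 0 < ε) :
    ∃ N : ℕ, 1 ≤ N ∧ ∀ n, N ≤ n → ∀ ν : Measure X, IsProbabilityMeasure ν →
      (∀ A : Set X, MeasurableSet A → ν (g ⁻¹' A) = ν A) →
      |(∫ x, f x ∂ν) - (n:ℝ)⁻¹ * ∑ i ∈ Finset.range n, f (g^[i] z)| ≤ ε := by
  classical
  set C := ‖f‖ with hC
  have hC0 : 0 ≤ C := norm_nonneg f
  have hfb : ∀ x : X, |f x| ≤ C := fun x => f.norm_coe_le_norm x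
  -- uniform continuity of f
  obtain ⟨η₁, hη₁, hf1⟩ := Metric.uniformContinuous_iff.mp
    (CompactSpace.uniformContinuous_of_continuous f.continuous) (ε/2) (by linarith)
  -- uniform equicontinuity of iterates
  obtain ⟨η, hη, hueη⟩ := hue (η₁/2) (by linarith)
  -- finite subcover by balls around orbit points
  have hcov : Set.univ ⊆ ⋃ m : ℕ, Metric.ball (g^[m] z) η := by
    intro y _
    have hy : y ∈ closure (Set.range fun n : ℕ => g^[n] z) := hz ▸ Set.mem_univ y
    obtain ⟨o, ⟨m, rfl⟩, ho⟩ := Metric.mem_closure_iff.mp hy η hη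
    exact Set.mem_iUnion.mpr ⟨m, by simpa [dist_comm] using ho⟩
  obtain ⟨t, ht⟩ := isCompact_univ.elim_finite_subcover
    (fun m : ℕ => Metric.ball (g^[m] z) η) (fun m => Metric.isOpen_ball) hcov
  set M := t.sup id with hM
  have hnear : ∀ y : X, ∃ m ≤ M, dist y (g^[m] z) < η := by
    intro y
    obtain ⟨m, hm, hy⟩ := Set.mem_iUnion₂.mp (ht (Set.mem_univ y))
    exact ⟨m, Finset.le_sup (f := id) hm, Metric.mem_ball.mp hy⟩
  -- bound on shifted sums along the orbit of z
  have sum_shift : ∀ (n m : ℕ),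
      |(∑ i ∈ Finset.range n, f (g^[i + m] z)) - ∑ i ∈ Finset.range n, f (g^[i] z)|
        ≤ 2 * m * C := by
    intro n m
    have e1 : (∑ i ∈ Finset.range n, f (g^[i + m] z)) = ∑ j ∈ Finset.Ico m (n + m), f (g^[j] z) := by
      rw [Finset.sum_Ico_eq_sum_range]
      simp [add_comm, Nat.add_sub_cancel]
    have bnd : ∀ a b : ℕ, |∑ j ∈ Finset.Ico a b, f (g^[j] z)| ≤ ((b - a : ℕ) : ℝ) * C := by
      intro a b
      calc |∑ j ∈ Finset.Ico a b, f (g^[j] z)| ≤ ∑ j ∈ Finset.Ico a b, |f (g^[j] z)| :=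
            Finset.abs_sum_le_sum_abs _ _
        _ ≤ ∑ _j ∈ Finset.Ico a b, C := Finset.sum_le_sum (fun j _ => hfb _)
        _ = ((b - a : ℕ) : ℝ) * C := by simp [Finset.sum_const, Nat.card_Ico, mul_comm]
    rcases le_or_gt m n with hmn | hmn
    · have e2 : ∑ j ∈ Finset.Ico m (n+m), f (g^[j] z)
          = (∑ j ∈ Finset.Ico m n, f (g^[j] z)) + ∑ j ∈ Finset.Ico n (n+m), f (g^[j] z) :=
        (Finset.sum_Ico_consecutive _ hmn (by omega)).symm
      have e3 : ∑ i ∈ Finset.range n, f (g^[i] z)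
          = (∑ j ∈ Finset.Ico 0 m, f (g^[j] z)) + ∑ j ∈ Finset.Ico m n, f (g^[j] z) := by
        rw [Finset.sum_Ico_consecutive _ (Nat.zero_le m) hmn, Finset.range_eq_Ico]
      rw [e1, e2, e3]
      have b1 := bnd n (n+m)
      have b2 := bnd 0 m
      have hc1 : ((n + m - n : ℕ) : ℝ) = (m : ℝ) := by norm_cast; omega
      have hc2 : ((m - 0 : ℕ) : ℝ) = (m : ℝ) := by norm_cast
      rw [hc1] at b1; rw [hc2] at b2
      calc |(∑ j ∈ Finset.Ico m n, f (g^[j] z)) + ∑ j ∈ Finset.Ico n (n+m), f (g^[j] z)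
            - ((∑ j ∈ Finset.Ico 0 m, f (g^[j] z)) + ∑ j ∈ Finset.Ico m n, f (g^[j] z))|
          = |(∑ j ∈ Finset.Ico n (n+m), f (g^[j] z)) - ∑ j ∈ Finset.Ico 0 m, f (g^[j] z)| := by
            ring_nf
        _ ≤ |∑ j ∈ Finset.Ico n (n+m), f (g^[j] z)| + |∑ j ∈ Finset.Ico 0 m, f (g^[j] z)| :=
            abs_sub _ _
        _ ≤ (m:ℝ) * C + (m:ℝ) * C := add_le_add b1 b2
        _ = 2 * m * C := by ring
    · -- n < m : crude bound
      have b1 : |∑ i ∈ Finset.range n, f (g^[i + m] z)| ≤ (n:ℝ) * C := by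
        rw [e1]
        have := bnd m (n+m)
        have hc : ((n + m - m : ℕ) : ℝ) = (n : ℝ) := by norm_cast; omega
        rwa [hc] at this
      have b2 : |∑ i ∈ Finset.range n, f (g^[i] z)| ≤ (n:ℝ) * C := by
        have := bnd 0 n
        rw [← Finset.range_eq_Ico] at this
        simpa using this
      have hnm : (n:ℝ) ≤ (m:ℝ) := by exact_mod_cast hmn.le
      calc |(∑ i ∈ Finset.range n, f (g^[i + m] z)) - ∑ i ∈ Finset.range n, f (g^[i] z)|
          ≤ |∑ i ∈ Finset.range n, f (g^[i + m] z)| + |∑ i ∈ Finset.range n, f (g^[i] z)| :=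
            abs_sub _ _
        _ ≤ (n:ℝ) * C + (n:ℝ) * C := add_le_add b1 b2
        _ ≤ (m:ℝ) * C + (m:ℝ) * C := by nlinarith
        _ = 2 * m * C := by ring
  -- pointwise bound on Birkhoff sums
  have ptw : ∀ (y : X) (n : ℕ),
      |(∑ i ∈ Finset.range n, f (g^[i] y)) - ∑ i ∈ Finset.range n, f (g^[i] z)|
        ≤ n * (ε/2) + 2 * M * C := by
    intro y n
    obtain ⟨m, hmM, hym⟩ := hnear y
    have step : ∀ i : ℕ, |f (g^[i] y) - f (g^[i + m] z)| ≤ ε/2 := by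
      intro i
      have hd : dist (g^[i] y) (g^[i] (g^[m] z)) ≤ η₁/2 := hueη y (g^[m] z) hym.le i
      have hd2 : dist (g^[i] y) (g^[i + m] z) < η₁ := by
        rw [Function.iterate_add_apply]
        linarith
      have := hf1 hd2
      rw [Real.dist_eq] at this
      exact this.le
    have b1 : |(∑ i ∈ Finset.range n, f (g^[i] y)) - ∑ i ∈ Finset.range n, f (g^[i + m] z)|
        ≤ n * (ε/2) := by
      rw [← Finset.sum_sub_distrib]
      calc |∑ i ∈ Finset.range n, (f (g^[i] y) - f (g^[i + m] z))|
          ≤ ∑ i ∈ Finset.range n, |f (g^[i] y) - f (g^[i + m] z)| := Finset.abs_sum_le_sum_abs _ _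
        _ ≤ ∑ _i ∈ Finset.range n, (ε/2) := Finset.sum_le_sum (fun i _ => step i)
        _ = n * (ε/2) := by simp [Finset.sum_const, mul_comm]
    have b2 := sum_shift n m
    have hmM' : (m:ℝ) ≤ (M:ℝ) := by exact_mod_cast hmM
    calc |(∑ i ∈ Finset.range n, f (g^[i] y)) - ∑ i ∈ Finset.range n, f (g^[i] z)|
        ≤ |(∑ i ∈ Finset.range n, f (g^[i] y)) - ∑ i ∈ Finset.range n, f (g^[i + m] z)|
          + |(∑ i ∈ Finset.range n, f (g^[i + m] z)) - ∑ i ∈ Finset.range n, f (g^[i] z)| :=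
          abs_sub_le _ _ _
      _ ≤ n * (ε/2) + 2 * m * C := add_le_add b1 b2
      _ ≤ n * (ε/2) + 2 * M * C := by nlinarith
  -- choice of N
  obtain ⟨N₀, hN₀⟩ := exists_nat_gt ((2 * M * C) / (ε/2))
  refine ⟨max N₀ 1, le_max_right _ _, fun n hn ν hν hνinv => ?_⟩
  have hn1 : 1 ≤ n := le_trans (le_max_right _ _) hn
  have hnpos : (0:ℝ) < n := by exact_mod_cast hn1
  have hnN₀ : (N₀ : ℝ) ≤ n := by exact_mod_cast le_trans (le_max_left _ _) hn
  have htail : 2 * M * C / n ≤ ε/2 := by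
    rw [div_le_iff₀ hnpos]
    have h2 : 2 * (M:ℝ) * C / (ε/2) < (n:ℝ) := lt_of_lt_of_le hN₀ hnN₀
    rw [div_lt_iff₀ (by linarith : (0:ℝ) < ε/2)] at h2
    linarith
  -- measure invariance under iterates
  have hmap1 : Measure.map g ν = ν := by
    ext A hA
    rw [Measure.map_apply hg.measurable hA]
    exact hνinv A hA
  have hmap : ∀ i : ℕ, Measure.map (g^[i]) ν = ν := by
    intro i
    induction i with
    | zero => simp
    | succ i ih =>
      rw [Function.iterate_succ, ← Measure.map_map (hg.iterate i).measurable hg.measurable,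
        hmap1, ih]
  have hint : ∀ i : ℕ, ∫ x, f (g^[i] x) ∂ν = ∫ x, f x ∂ν := by
    intro i
    rw [← integral_map (hg.iterate i).measurable.aemeasurable
      f.continuous.measurable.aestronglyMeasurable, hmap i]
  have hintg : ∀ i : ℕ, Integrable (fun x => f (g^[i] x)) ν := by
    intro i
    exact (f.compContinuous ⟨g^[i], hg.iterate i⟩).integrable ν
  have hsumint : ∫ x, (∑ i ∈ Finset.range n, f (g^[i] x)) ∂ν = n * ∫ x, f x ∂ν := by
    rw [integral_finset_sum _ (fun i _ => hintg i)]
    simp [hint, Finset.sum_const, mul_comm]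
  set Sz := ∑ i ∈ Finset.range n, f (g^[i] z) with hSz
  have hFint : Integrable (fun x => (∑ i ∈ Finset.range n, f (g^[i] x)) - Sz) ν :=
    (integrable_finset_sum _ (fun i _ => hintg i)).sub (integrable_const Sz)
  have hdiff : ∫ x, ((∑ i ∈ Finset.range n, f (g^[i] x)) - Sz) ∂ν
      = n * (∫ x, f x ∂ν) - Sz := by
    rw [integral_sub (integrable_finset_sum _ (fun i _ => hintg i)) (integrable_const Sz),
      hsumint, integral_const]
    simp [hν.measure_univ]
  have hbound : |n * (∫ x, f x ∂ν) - Sz| ≤ n * (ε/2) + 2 * M * C := by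
    rw [← hdiff]
    have := norm_integral_le_of_norm_le_const (μ := ν)
      (f := fun x => (∑ i ∈ Finset.range n, f (g^[i] x)) - Sz)
      (C := n * (ε/2) + 2 * M * C)
      (Filter.Eventually.of_forall (fun x => by
        rw [Real.norm_eq_abs]; exact ptw x n))
    rw [Real.norm_eq_abs, probReal_univ] at this
    simpa using this
  have hfinal : |(∫ x, f x ∂ν) - (n:ℝ)⁻¹ * Sz| ≤ ε/2 + 2 * M * C / n := by
    have : (∫ x, f x ∂ν) - (n:ℝ)⁻¹ * Sz = (n:ℝ)⁻¹ * (n * (∫ x, f x ∂ν) - Sz) := by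
      field_simp
    rw [this, abs_mul, abs_inv, abs_of_pos hnpos]
    rw [inv_mul_le_iff₀ hnpos]
    calc |n * (∫ x, f x ∂ν) - Sz| ≤ n * (ε/2) + 2 * M * C := hbound
      _ = ↑n * (ε/2 + 2 * M * C / ↑n) := by field_simp
  linarith [hfinal, htail]

end AuxUE

/-- A continuous transitive map of a compact metric space without
isolated points, with a finite invariant measure of full support, which does not
have sensitive dependence on initial conditions, is uniquely ergodic. -/
theorem uniquely_ergodic_of_not_sensitive {X : Type*} [MetricSpace X] [CompactSpace X]
    [MeasurableSpace X] [BorelSpace X]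
    (hX : ∀ x : X, ¬ IsOpen ({x} : Set X))
    (g : X → X) (hg : Continuous g)
    (htrans : ∃ x : X, closure (Set.range fun n : ℕ => g^[n] x) = Set.univ)
    (μ : Measure X) [IsFiniteMeasure μ]
    (hinv : ∀ A : Set X, MeasurableSet A → μ (g ⁻¹' A) = μ A)
    (hfull : ∀ U : Set X, IsOpen U → U.Nonempty → 0 < μ U)
    (hnotsens : ¬ ∃ ε > 0, ∀ x : X, ∀ δ > 0, ∃ y ∈ Metric.closedBall x δ,
        ∃ n : ℕ, ε < dist (g^[n] x) (g^[n] y)) :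
    ∀ ν₁ ν₂ : Measure X, IsProbabilityMeasure ν₁ → IsProbabilityMeasure ν₂ →
      (∀ A : Set X, MeasurableSet A → ν₁ (g ⁻¹' A) = ν₁ A) →
      (∀ A : Set X, MeasurableSet A → ν₂ (g ⁻¹' A) = ν₂ A) →
      ν₁ = ν₂ := by
  intro ν₁ ν₂ hν₁ hν₂ hinv₁ hinv₂
  haveI := hν₁; haveI := hν₂
  push_neg at hnotsens
  have hstab : ∀ ε > 0, ∃ x : X, ∃ δ > 0, ∀ y, dist y x ≤ δ → ∀ n : ℕ,
      dist (g^[n] x) (g^[n] y) ≤ ε := by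
    intro ε hε
    obtain ⟨x, δ, hδ, h⟩ := hnotsens ε hε
    exact ⟨x, δ, hδ, fun y hy n => h y (Metric.mem_closedBall.mpr hy) n⟩
  obtain ⟨z, hz⟩ := htrans
  have hmin := minimal_orbits g hg μ hinv hfull hstab z hz
  have hue := unif_equicont g hg hstab hmin z
  have hI : ∀ f : X →ᵇ ℝ, ∫ x, f x ∂ν₁ = ∫ x, f x ∂ν₂ := by
    intro f
    have key : ∀ ε > 0, |(∫ x, f x ∂ν₁) - ∫ x, f x ∂ν₂| ≤ 2 * ε := by
      intro ε hε
      obtain ⟨N, hN1, hN⟩ := key_integral g hg z hz hue f ε hε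
      have h1 := hN N le_rfl ν₁ hν₁ hinv₁
      have h2 := hN N le_rfl ν₂ hν₂ hinv₂
      set c := (N:ℝ)⁻¹ * ∑ i ∈ Finset.range N, f (g^[i] z) with hc
      calc |(∫ x, f x ∂ν₁) - ∫ x, f x ∂ν₂|
          ≤ |(∫ x, f x ∂ν₁) - c| + |c - ∫ x, f x ∂ν₂| := abs_sub_le _ _ _
        _ ≤ ε + ε := add_le_add h1 (by rw [abs_sub_comm]; exact h2)
        _ = 2 * ε := by ring
    by_contra hne
    have hd : 0 < |(∫ x, f x ∂ν₁) - ∫ x, f x ∂ν₂| := abs_pos.mpr (sub_ne_zero.mpr hne)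
    have := key (|(∫ x, f x ∂ν₁) - ∫ x, f x ∂ν₂| / 4) (by linarith)
    linarith
  apply ext_of_forall_lintegral_eq_of_IsFiniteMeasure
  intro f
  have h1 : (∫⁻ x, (f x : ℝ≥0∞) ∂ν₁).toReal = (∫⁻ x, (f x : ℝ≥0∞) ∂ν₂).toReal := by
    rw [BoundedContinuousFunction.toReal_lintegral_coe_eq_integral,
      BoundedContinuousFunction.toReal_lintegral_coe_eq_integral]
    simpa using hI (BoundedContinuousFunction.mkOfCompact
      ⟨fun x => (f x : ℝ), NNReal.continuous_coe.comp f.continuous⟩)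
  exact (ENNReal.toReal_eq_toReal_iff'
    (BoundedContinuousFunction.lintegral_lt_top_of_nnreal ν₁ f).ne
    (BoundedContinuousFunction.lintegral_lt_top_of_nnreal ν₂ f).ne).mp h1
end
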